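/- Let n ≥ 2 and let v_0,…,v_n be affinely independent points in ℝ^n forming an n-simplex S all of whose facets are nonobtuse, and let G be any vertex Gramian of S. Then the unique solution x of G x = e (where e is the all-ones vector) has at most one negative entry, and for each j the unique solution y of G y = e_j (the j-th standard basis vector) has at most two positive entries. Equivalently, each column of G⁻¹ has at most two positive entries and G⁻¹ e has at most one negative entry. -/

import Mathlib

open Matrix Finset
open scoped RealInnerProductSpace

noncomputable section

/-- The vertex Gramian of the simplex with vertices `v` associated with vertex `v ℓ`. -/
def vGram {n : ℕ} (v : Fin (n + 1) → EuclideanSpace ℝ (Fin n)) (ℓ : Fin (n + 1)) :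
    Matrix {k : Fin (n + 1) // k ≠ ℓ} {k : Fin (n + 1) // k ≠ ℓ} ℝ :=
  Matrix.of fun i j => ⟪v i.1 - v ℓ, v j.1 - v ℓ⟫

/-- A Stieltjes matrix: symmetric positive definite with nonpositive off-diagonal entries. -/
def IsStieltjes {ι : Type*} [Fintype ι] (M : Matrix ι ι ℝ) : Prop :=
  M.PosDef ∧ ∀ i j, i ≠ j → M i j ≤ 0

/-- Weakly diagonally dominant: `M e ≥ 0` entrywise for the all-ones vector `e`. -/
def IsWDD {ι : Type*} [Fintype ι] (M : Matrix ι ι ℝ) : Prop :=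
  ∀ i, 0 ≤ ∑ j, M i j

/-- Pointwise weakly diagonally dominant: each diagonal entry is maximal in its row. -/
def PWDD {ι : Type*} (M : Matrix ι ι ℝ) : Prop :=
  ∀ i j, M i j ≤ M i i

/-- The orthogonal projection of `x` onto the affine span of `{v k : k ∈ s}`
lies in the convex hull of `{v k : k ∈ s}`. -/
def ProjInHull {n : ℕ} (x : EuclideanSpace ℝ (Fin n))
    (v : Fin (n + 1) → EuclideanSpace ℝ (Fin n)) (s : Set (Fin (n + 1))) : Prop :=
  ∃ p ∈ convexHull ℝ (v '' s), ∀ a ∈ s, ∀ b ∈ s, ⟪x - p, v a - v b⟫ = 0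

/-- All facets of the simplex are nonobtuse: each vertex `v i` projects, for each `j ≠ i`,
into the convex hull of the vertices other than `v i, v j`. -/
def FacetsNonobtuse {n : ℕ} (v : Fin (n + 1) → EuclideanSpace ℝ (Fin n)) : Prop :=
  ∀ i j : Fin (n + 1), i ≠ j → ProjInHull (v i) v {k | k ≠ i ∧ k ≠ j}

/-- `q` is an inward normal to the facet opposite `v j`. -/
def IsInwardNormal {n : ℕ} (v : Fin (n + 1) → EuclideanSpace ℝ (Fin n)) (j : Fin (n + 1))
    (q : EuclideanSpace ℝ (Fin n)) : Prop :=
  q ≠ 0 ∧ (∀ a b : Fin (n + 1), a ≠ j → b ≠ j → ⟪q, v a - v b⟫ = 0) ∧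
    ∀ k : Fin (n + 1), k ≠ j → 0 < ⟪q, v j - v k⟫

/-- The `j`-th column of `A` is a blocking column: no off-diagonal entry of column `j`
is minimal in its row. -/
def IsBlockingCol {ι : Type*} (A : Matrix ι ι ℝ) (j : ι) : Prop :=
  ∀ i, i ≠ j → ∃ k, A i k < A i j

/-- `A` is nonblocking: every column has an off-diagonal entry minimal in its row. -/
def IsNonblocking {ι : Type*} (A : Matrix ι ι ℝ) : Prop :=
  ∀ j, ∃ i, i ≠ j ∧ ∀ k, A i j ≤ A i k

/-- A (symmetric nonnegative) ultrametric matrix. -/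
def IsUltra {ι : Type*} (A : Matrix ι ι ℝ) : Prop :=
  (∀ i j, 0 ≤ A i j) ∧ (∀ i j, A i j ≤ A i i) ∧ ∀ i j k, min (A i k) (A k j) ≤ A i j

/-- The principal submatrix of `A` with rows and columns restricted to `s`. -/
def subMat {ι : Type*} (A : Matrix ι ι ℝ) (s : Finset ι) :
    Matrix {x // x ∈ s} {x // x ∈ s} ℝ :=
  A.submatrix (fun i => i.1) (fun j => j.1)

/-- The principal submatrix of `A` obtained by deleting row and column `m`. -/
def delMat {ι : Type*} (A : Matrix ι ι ℝ) (m : ι) : Matrix {i // i ≠ m} {i // i ≠ m} ℝ :=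
  A.submatrix (fun i => i.1) (fun j => j.1)

section Tetra

variable {V : Type*} [NormedAddCommGroup V] [InnerProductSpace ℝ V]

/-- The triangle with vertices `a, b, c` is nonobtuse. -/
def NonobtuseTri (a b c : V) : Prop :=
  0 ≤ ⟪b - a, c - a⟫ ∧ 0 ≤ ⟪a - b, c - b⟫ ∧ 0 ≤ ⟪a - c, b - c⟫

/-- The sub-orthocentric set of the triangle `a b c`: the union over the vertices of the
closed segments from the vertex to the orthocenter. -/
def SubOrthoSet (a b c : V) : Set V :=
  {x | ∃ h, h ∈ affineSpan ℝ ({a, b, c} : Set V) ∧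
    ⟪h - a, b - c⟫ = 0 ∧ ⟪h - b, a - c⟫ = 0 ∧
    (x ∈ segment ℝ a h ∨ x ∈ segment ℝ b h ∨ x ∈ segment ℝ c h)}

/-- `p` is the orthogonal projection of `x` onto the affine span of `{a, b, c}`. -/
def IsOrthProjTri (x p a b c : V) : Prop :=
  p ∈ affineSpan ℝ ({a, b, c} : Set V) ∧ ⟪x - p, b - a⟫ = 0 ∧ ⟪x - p, c - a⟫ = 0

/-- A sub-orthocentric tetrahedron: all triangular faces are nonobtuse and each vertex
projects orthogonally into the sub-orthocentric set of its opposite face. -/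
def IsSubOrthoTetra (w : Fin 4 → V) : Prop :=
  ∀ i : Fin 4,
    NonobtuseTri (w (i.succAbove 0)) (w (i.succAbove 1)) (w (i.succAbove 2)) ∧
    ∃ p, IsOrthProjTri (w i) p (w (i.succAbove 0)) (w (i.succAbove 1)) (w (i.succAbove 2)) ∧
      p ∈ SubOrthoSet (w (i.succAbove 0)) (w (i.succAbove 1)) (w (i.succAbove 2))

end Tetra

lemma inner_le_of_mem_convexHull' {E : Type*} [NormedAddCommGroup E] [InnerProductSpace ℝ E]
    {S : Set E} {p : E} (hp : p ∈ convexHull ℝ S) {w x : E}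
    (h : ∀ z ∈ S, ⟪w, x - z⟫ ≤ 0) : ⟪w, x - p⟫ ≤ 0 := by
  have hlin : IsLinearMap ℝ (fun y : E => ⟪w, y⟫) :=
    ⟨fun a b => inner_add_right w a b, fun c a => real_inner_smul_right w a c⟩
  have hc : Convex ℝ {y : E | ⟪w, x⟫ ≤ ⟪w, y⟫} := convex_halfSpace_ge hlin _
  have hsub : S ⊆ {y : E | ⟪w, x⟫ ≤ ⟪w, y⟫} := by
    intro z hz
    have := h z hz
    rw [inner_sub_right] at this
    simpa using this
  have := convexHull_min hsub hc hp
  rw [inner_sub_right]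
  simpa using this

lemma inner_eq_of_mem_convexHull' {E : Type*} [NormedAddCommGroup E] [InnerProductSpace ℝ E]
    {S : Set E} {p : E} (hp : p ∈ convexHull ℝ S) {w x : E}
    (h : ∀ z ∈ S, ⟪w, x - z⟫ = 0) : ⟪w, x - p⟫ = 0 := by
  refine le_antisymm (inner_le_of_mem_convexHull' hp fun z hz => (h z hz).le) ?_
  have hneg : ⟪-w, x - p⟫ ≤ 0 :=
    inner_le_of_mem_convexHull' hp fun z hz => by rw [inner_neg_left, h z hz]; simp
  rw [inner_neg_left] at hneg
  linarith


set_option maxHeartbeats 1000000 in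
theorem stmt5 (n : ℕ) (hn : 2 ≤ n) (v : Fin (n + 1) → EuclideanSpace ℝ (Fin n))
    (hv : AffineIndependent ℝ v) (hfac : FacetsNonobtuse v) (ℓ : Fin (n + 1)) :
    (∀ x : {k : Fin (n + 1) // k ≠ ℓ} → ℝ, vGram v ℓ *ᵥ x = 1 →
        {i | x i < 0}.ncard ≤ 1) ∧
    (∀ (j : {k : Fin (n + 1) // k ≠ ℓ}) (y : {k : Fin (n + 1) // k ≠ ℓ} → ℝ),
        vGram v ℓ *ᵥ y = Pi.single j 1 → {i | 0 < y i}.ncard ≤ 2) := by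
  classical
  classical
  have hli : LinearIndependent ℝ (fun i : {k : Fin (n+1) // k ≠ ℓ} => v i.1 - v ℓ) := by
    have := (affineIndependent_iff_linearIndependent_vsub ℝ v ℓ).mp hv
    simpa [vsub_eq_sub] using this
  have hcard : Fintype.card {k : Fin (n+1) // k ≠ ℓ} =
      Module.finrank ℝ (EuclideanSpace ℝ (Fin n)) := by
    simp [Fintype.card_subtype_compl, finrank_euclideanSpace_fin]
  haveI : Nontrivial (Fin (n+1)) := by
    apply Fin.nontrivial_iff_two_le.mpr; omega
  haveI hne : Nonempty {k : Fin (n+1) // k ≠ ℓ} := by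
    obtain ⟨x, hx⟩ := exists_ne ℓ
    exact ⟨⟨x, hx⟩⟩
  let b : Module.Basis {k : Fin (n+1) // k ≠ ℓ} ℝ (EuclideanSpace ℝ (Fin n)) :=
    basisOfLinearIndependentOfCardEqFinrank hli hcard
  have hb : ∀ i, b i = v i.1 - v ℓ := fun i => by
    simp [b, coe_basisOfLinearIndependentOfCardEqFinrank]
  let q : {k : Fin (n+1) // k ≠ ℓ} → EuclideanSpace ℝ (Fin n) := fun i =>
    (InnerProductSpace.toDual ℝ (EuclideanSpace ℝ (Fin n))).symm
      (LinearMap.toContinuousLinearMap (b.coord i))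
  have hq : ∀ i x, ⟪q i, x⟫ = b.coord i x := fun i x => by
    simp [q, InnerProductSpace.toDual_symm_apply]
  have hqb : ∀ i j, ⟪q i, v j.1 - v ℓ⟫ = if i = j then (1:ℝ) else 0 := by
    intro i j
    rw [← hb, hq, Module.Basis.coord_apply, Module.Basis.repr_self, Finsupp.single_apply]
    simp [eq_comm]
  let Q : Fin (n+1) → EuclideanSpace ℝ (Fin n) := fun k =>
    if h : k = ℓ then -∑ i : {k : Fin (n+1) // k ≠ ℓ}, q i else q ⟨k, h⟩
  have hQl : ∀ k a, ⟪Q k, v a - v ℓ⟫ =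
      (if k = a then (1:ℝ) else 0) - (if k = ℓ then 1 else 0) := by
    intro k a
    rcases eq_or_ne a ℓ with rfl | ha
    · rw [sub_self, inner_zero_right]
      simp
    · rcases eq_or_ne k ℓ with hk | hk
      · have hQk : Q k = -∑ i : {k : Fin (n+1) // k ≠ ℓ}, q i := by
          simp only [Q]; rw [dif_pos hk]
        rw [hQk, inner_neg_left, sum_inner]
        rw [Finset.sum_congr rfl fun i _ => hqb i ⟨a, ha⟩]
        have hka : k ≠ a := by rw [hk]; exact Ne.symm ha
        simp [Finset.sum_ite_eq', ha, hk, hka, Ne.symm ha]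
      · have hQk : Q k = q ⟨k, hk⟩ := by
          simp only [Q]; rw [dif_neg hk]
        rw [hQk, hqb ⟨k, hk⟩ ⟨a, ha⟩]
        simp [hk, Subtype.ext_iff]
  have hQ : ∀ k a c, ⟪Q k, v a - v c⟫ =
      (if k = a then (1:ℝ) else 0) - (if k = c then 1 else 0) := by
    intro k a c
    have : v a - v c = (v a - v ℓ) - (v c - v ℓ) := by abel
    rw [this, inner_sub_right, hQl, hQl]
    ring
  have hker : ∀ w : EuclideanSpace ℝ (Fin n),
      (∀ k, ⟪w, v k - v ℓ⟫ = 0) → w = 0 := by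
    intro w hw
    have h2 : ⟪w, w⟫ = 0 := by
      have : ⟪w, ∑ i, b.repr w i • b i⟫ = 0 := by
        rw [inner_sum]
        refine Finset.sum_eq_zero fun i _ => ?_
        rw [real_inner_smul_right, hb, hw, mul_zero]
      rwa [b.sum_repr w] at this
    exact inner_self_eq_zero.mp h2
  have hthree : ∀ a c : Fin (n+1), ∃ x, x ≠ a ∧ x ≠ c := by
    intro a c
    by_contra hcon
    push_neg at hcon
    have hsub : (Finset.univ : Finset (Fin (n+1))) ⊆ {a, c} := by
      intro x _
      rcases eq_or_ne x a with rfl | hxa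
      · simp
      · simp [hcon x hxa]
    have := Finset.card_le_card hsub
    have h2 : ({a, c} : Finset (Fin (n+1))).card ≤ 2 :=
      (Finset.card_insert_le _ _).trans (by simp)
    simp [Fintype.card_fin] at this
    omega
  have hQne : ∀ k, Q k ≠ 0 := by
    intro k hk0
    obtain ⟨x, hx, -⟩ := hthree k k
    have h := hQ k k x
    rw [hk0, inner_zero_left] at h
    simp [Ne.symm hx] at h
  have hQind : ∀ a c : Fin (n+1), a ≠ c → ∀ r : ℝ, Q c ≠ r • Q a := by
    intro a c hac r hr
    obtain ⟨x, hxa, hxc⟩ := hthree a c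
    have h1 : ⟪Q c, v c - v x⟫ = 1 := by rw [hQ]; simp [Ne.symm hxc]
    have h2 : ⟪Q a, v c - v x⟫ = 0 := by rw [hQ]; simp [hac, Ne.symm hxa]
    rw [hr, real_inner_smul_left, h2, mul_zero] at h1
    exact one_ne_zero h1.symm
  have hU : ∀ s m : Fin (n+1), s ≠ m →
      ∃ u p : EuclideanSpace ℝ (Fin n),
        p ∈ convexHull ℝ (v '' {k | k ≠ s ∧ k ≠ m}) ∧ u = v s - p ∧
        0 < ⟪u, u⟫ ∧
        (∀ a, a ≠ s → a ≠ m → ⟪u, v s - v a⟫ = ⟪u, u⟫) ∧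
        (∀ t k, t ≠ s → t ≠ m → k ≠ t → k ≠ m → ⟪u, v t - v k⟫ ≤ 0) ∧
        (∀ w : EuclideanSpace ℝ (Fin n),
          (∀ k, k ≠ s → k ≠ m → ⟪w, v s - v k⟫ = 0) → ⟪w, u⟫ = 0) := by
    intro s m hsm
    obtain ⟨p, hp, hperp⟩ := hfac s m hsm
    have himg_eq : ∀ w x : EuclideanSpace ℝ (Fin n),
        (∀ kk, kk ≠ s → kk ≠ m → ⟪w, x - v kk⟫ = 0) → ⟪w, x - p⟫ = 0 := by
      intro w x h
      refine inner_eq_of_mem_convexHull' hp ?_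
      rintro z ⟨kk, ⟨h1, h2⟩, rfl⟩
      exact h kk h1 h2
    have h1 : ∀ a, a ≠ s → a ≠ m → ⟪v s - p, v s - v a⟫ = ⟪v s - p, v s - p⟫ := by
      intro a has ham
      have e1 : ⟪v s - p, v a - p⟫ = 0 :=
        himg_eq _ (v a) fun kk hk1 hk2 => hperp a ⟨has, ham⟩ kk ⟨hk1, hk2⟩
      have e2 : v s - v a = (v s - p) + (p - v a) := by abel
      have e3 : ⟪v s - p, p - v a⟫ = 0 := by
        rw [show p - v a = -(v a - p) by abel, inner_neg_right, e1, neg_zero]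
      rw [e2, inner_add_right, e3, add_zero]
    have hune : v s - p ≠ 0 := by
      intro h0
      have hvs : v s = p := by rwa [sub_eq_zero] at h0
      have hps : p ∈ (affineSpan ℝ (v '' {k | k ≠ s ∧ k ≠ m}) : Set _) :=
        convexHull_subset_affineSpan _ hp
      have hni := hv.notMem_affineSpan_diff s {k | k ≠ s ∧ k ≠ m}
      have hset : ({k | k ≠ s ∧ k ≠ m} : Set (Fin (n+1))) \ {s} = {k | k ≠ s ∧ k ≠ m} := by
        ext y; simp only [Set.mem_diff, Set.mem_setOf_eq, Set.mem_singleton_iff]; tauto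
      rw [hset] at hni
      exact hni (hvs ▸ hps)
    have hpos : 0 < ⟪v s - p, v s - p⟫ := lt_of_le_of_ne real_inner_self_nonneg (Ne.symm fun h => hune (inner_self_eq_zero.mp h))
    refine ⟨v s - p, p, hp, rfl, hpos, h1, ?_, ?_⟩
    · intro t k ht htm hkt hkm
      rcases eq_or_ne k s with rfl | hks
      · have := h1 t ht htm
        rw [show v t - v k = -(v k - v t) by abel, inner_neg_right, this]
        linarith
      · exact (hperp t ⟨ht, htm⟩ k ⟨hks, hkm⟩).le
    · intro w hw
      exact himg_eq w (v s) fun kk hk1 hk2 => hw kk hk1 hk2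
  have hbrep : ∀ s m : Fin (n+1), s ≠ m → ∀ u : EuclideanSpace ℝ (Fin n),
      0 < ⟪u, u⟫ → (∀ a, a ≠ s → a ≠ m → ⟪u, v s - v a⟫ = ⟪u, u⟫) →
      ⟪Q m, u⟫ = 0 → ∃ bs : ℝ, Q s = (⟪u, u⟫)⁻¹ • u + bs • Q m := by
    intro s m hsm u hc h1 hQmu
    set c : ℝ := ⟪u, u⟫ with hcdef
    set bs : ℝ := -1 - c⁻¹ * ⟪u, v m - v s⟫ with hbsdef
    refine ⟨bs, ?_⟩
    have hW : Q s - (c⁻¹ • u + bs • Q m) = 0 := by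
      apply hker
      have hWm : ∀ β, ⟪Q s - (c⁻¹ • u + bs • Q m), v m - v β⟫ = 0 := by
        intro β
        rcases eq_or_ne β m with rfl | hbm
        · rw [sub_self, inner_zero_right]
        · rw [inner_sub_left, inner_add_left, real_inner_smul_left, real_inner_smul_left]
          have eQs : ⟪Q s, v m - v β⟫ = -(if s = β then (1:ℝ) else 0) := by
            rw [hQ]; simp [hsm]
          have eQm : ⟪Q m, v m - v β⟫ = 1 := by
            rw [hQ]; simp [Ne.symm hbm]
          have eu : ⟪u, v m - v β⟫ =
              ⟪u, v m - v s⟫ + (if β = s then 0 else c) := by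
            rw [show v m - v β = (v m - v s) + (v s - v β) by abel, inner_add_right]
            congr 1
            rcases eq_or_ne β s with rfl | hbs2
            · rw [sub_self, inner_zero_right]; simp
            · rw [h1 β hbs2 hbm]; simp [hbs2]
          rw [eQs, eQm, eu]
          have hcne : c ≠ 0 := ne_of_gt hc
          rcases eq_or_ne β s with rfl | hbs2
          · simp only [if_pos rfl, eq_self_iff_true, if_true, hbsdef]
            ring
          · rw [if_neg (Ne.symm hbs2), if_neg hbs2, hbsdef, mul_add,
              inv_mul_cancel₀ hcne]
            ring
      intro k
      have e := hWm ℓ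
      have e2 := hWm k
      have e3 : v k - v ℓ = (v m - v ℓ) - (v m - v k) := by abel
      rw [e3, inner_sub_right, e, e2, sub_zero]
    have := sub_eq_zero.mp hW
    exact this
  have hN : ∀ m s t : Fin (n+1), s ≠ m → t ≠ m → s ≠ t →
      ⟪Q s, Q t⟫ * ⟪Q m, Q m⟫ ≤ ⟪Q s, Q m⟫ * ⟪Q t, Q m⟫ := by
    intro m s t hsm htm hst
    obtain ⟨us, ps, hps, hus_eq, hcs, h1s, h2s, h3s⟩ := hU s m hsm
    obtain ⟨ut, pt, hpt, hut_eq, hct, h1t, h2t, h3t⟩ := hU t m htm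
    have hQmus : ⟪Q m, us⟫ = 0 := by
      refine h3s (Q m) fun k hks hkm => ?_
      rw [hQ]; simp [Ne.symm hsm, Ne.symm hkm]
    have hQmut : ⟪Q m, ut⟫ = 0 := by
      refine h3t (Q m) fun k hkt hkm => ?_
      rw [hQ]; simp [Ne.symm htm, Ne.symm hkm]
    have hust : ⟪us, ut⟫ ≤ 0 := by
      rw [hut_eq]
      refine inner_le_of_mem_convexHull' hpt ?_
      rintro z ⟨kk, ⟨hk1, hk2⟩, rfl⟩
      exact h2s t kk (Ne.symm hst) htm hk1 hk2
    obtain ⟨bs, hbs⟩ := hbrep s m hsm us hcs h1s hQmus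
    obtain ⟨bt, hbt⟩ := hbrep t m htm ut hct h1t hQmut
    have husQm : ⟪us, Q m⟫ = 0 := by rw [real_inner_comm]; exact hQmus
    have hutQm : ⟪ut, Q m⟫ = 0 := by rw [real_inner_comm]; exact hQmut
    have e1 : ⟪Q s, Q t⟫ = (⟪us, us⟫)⁻¹ * (⟪ut, ut⟫)⁻¹ * ⟪us, ut⟫
        + bs * bt * ⟪Q m, Q m⟫ := by
      rw [hbs, hbt]
      simp only [inner_add_left, inner_add_right, real_inner_smul_left,
        real_inner_smul_right, husQm, hutQm, hQmut, hQmus]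
      ring
    have e2 : ⟪Q s, Q m⟫ = bs * ⟪Q m, Q m⟫ := by
      rw [hbs]
      simp only [inner_add_left, real_inner_smul_left, husQm]
      ring
    have e3 : ⟪Q t, Q m⟫ = bt * ⟪Q m, Q m⟫ := by
      rw [hbt]
      simp only [inner_add_left, real_inner_smul_left, hutQm]
      ring
    rw [e1, e2, e3]
    have hnm : (0:ℝ) ≤ ⟪Q m, Q m⟫ := real_inner_self_nonneg
    have his : (0:ℝ) < (⟪us, us⟫)⁻¹ := inv_pos.mpr hcs
    have hit : (0:ℝ) < (⟪ut, ut⟫)⁻¹ := inv_pos.mpr hct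
    nlinarith [mul_pos his hit, mul_nonneg (mul_nonneg his.le hit.le) hnm]
  have hone : ∀ j a c : Fin (n+1), a ≠ j → c ≠ j → a ≠ c →
      0 < ⟪Q a, Q j⟫ → 0 < ⟪Q c, Q j⟫ → False := by
    intro j a c haj hcj hac hpa hpc
    have hna : 0 < ⟪Q a, Q a⟫ := lt_of_le_of_ne real_inner_self_nonneg
      (Ne.symm fun h => hQne a (inner_self_eq_zero.mp h))
    have hnc : 0 < ⟪Q c, Q c⟫ := lt_of_le_of_ne real_inner_self_nonneg
      (Ne.symm fun h => hQne c (inner_self_eq_zero.mp h))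
    have hα : 0 < ⟪Q j, Q a⟫ := by rwa [real_inner_comm] at hpa
    have hβ : 0 < ⟪Q j, Q c⟫ := by rwa [real_inner_comm] at hpc
    have hN1 := hN a j c (Ne.symm haj) (Ne.symm hac) (Ne.symm hcj)
    have hN2 := hN c j a (Ne.symm hcj) hac (Ne.symm haj)
    have hcomm : ⟪Q c, Q a⟫ = ⟪Q a, Q c⟫ := real_inner_comm _ _
    have hγ : 0 < ⟪Q a, Q c⟫ := by nlinarith
    have hmul : (⟪Q j, Q c⟫ * ⟪Q a, Q a⟫) * (⟪Q j, Q a⟫ * ⟪Q c, Q c⟫) ≤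
        (⟪Q j, Q a⟫ * ⟪Q c, Q a⟫) * (⟪Q j, Q c⟫ * ⟪Q a, Q c⟫) := by
      refine mul_le_mul hN1 hN2 ?_ ?_
      · positivity
      · rw [hcomm]; positivity
    rw [hcomm] at hmul
    have hfin : ⟪Q a, Q a⟫ * ⟪Q c, Q c⟫ ≤ ⟪Q a, Q c⟫ * ⟪Q a, Q c⟫ := by
      nlinarith [hmul, mul_pos hα hβ]
    have hzz : ⟪(⟪Q a, Q a⟫ • Q c - ⟪Q a, Q c⟫ • Q a),
        (⟪Q a, Q a⟫ • Q c - ⟪Q a, Q c⟫ • Q a)⟫ ≤ 0 := by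
      simp only [inner_sub_left, inner_sub_right, real_inner_smul_left,
        real_inner_smul_right, hcomm]
      nlinarith [mul_le_mul_of_nonneg_left hfin hna.le]
    have hz0 := real_inner_self_nonpos.mp hzz
    have heq : ⟪Q a, Q a⟫ • Q c = ⟪Q a, Q c⟫ • Q a := sub_eq_zero.mp hz0
    have hQc : Q c = ((⟪Q a, Q a⟫)⁻¹ * ⟪Q a, Q c⟫) • Q a := by
      have h2 := congrArg (fun z : EuclideanSpace ℝ (Fin n) => (⟪Q a, Q a⟫)⁻¹ • z) heq
      simp only [smul_smul] at h2
      rw [inv_mul_cancel₀ (ne_of_gt hna), one_smul] at h2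
      exact h2
    exact hQind a c hac _ hQc
  have hG : ∀ i jj : {k : Fin (n+1) // k ≠ ℓ},
      vGram v ℓ i jj = ⟪v i.1 - v ℓ, v jj.1 - v ℓ⟫ := fun i jj => rfl
  have hcoord : ∀ (z : {k : Fin (n+1) // k ≠ ℓ} → ℝ) (i : {k : Fin (n+1) // k ≠ ℓ}),
      ⟪Q i.1, ∑ jj : {k : Fin (n+1) // k ≠ ℓ}, z jj • (v jj.1 - v ℓ)⟫ = z i := by
    intro z i
    rw [inner_sum]
    simp only [real_inner_smul_right]
    have hterm : ∀ jj : {k : Fin (n+1) // k ≠ ℓ},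
        z jj * ⟪Q i.1, v jj.1 - v ℓ⟫ = if jj = i then z jj else 0 := by
      intro jj
      rw [hQ]
      rcases eq_or_ne jj i with rfl | hji
      · simp [jj.2]
      · have hne2 : i.1 ≠ jj.1 := fun h => hji (Subtype.ext h.symm)
        simp [hne2, hji, i.2]
    rw [Finset.sum_congr rfl fun jj _ => hterm jj]
    simp [Finset.sum_ite_eq']
  constructor
  · intro x hx
    have hxw : ∀ i : {k : Fin (n+1) // k ≠ ℓ},
        ⟪v i.1 - v ℓ, ∑ jj : {k : Fin (n+1) // k ≠ ℓ}, x jj • (v jj.1 - v ℓ)⟫ = 1 := by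
      intro i
      have h0 := congrFun hx i
      rw [Matrix.mulVec, dotProduct] at h0
      have h0' : ∑ jj : {k : Fin (n+1) // k ≠ ℓ}, vGram v ℓ i jj * x jj = 1 := by
        rw [h0, Pi.one_apply]
      rw [inner_sum]
      simp only [real_inner_smul_right]
      rw [← h0']
      refine Finset.sum_congr rfl fun jj _ => ?_
      rw [hG, mul_comm]
    set w := ∑ jj : {k : Fin (n+1) // k ≠ ℓ}, x jj • (v jj.1 - v ℓ) with hwdef
    have hwQ : w = -Q ℓ := by
      have hadd : w + Q ℓ = 0 := by
        apply hker
        intro k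
        rw [inner_add_left]
        rcases eq_or_ne k ℓ with rfl | hk
        · rw [sub_self, inner_zero_right, inner_zero_right, add_zero]
        · have h1 : ⟪w, v k - v ℓ⟫ = 1 := by
            rw [real_inner_comm]; exact hxw ⟨k, hk⟩
          have h2 : ⟪Q ℓ, v k - v ℓ⟫ = -1 := by
            rw [hQ]; simp [Ne.symm hk]
          rw [h1, h2]; ring
      exact eq_neg_of_add_eq_zero_left hadd
    have hxval : ∀ i : {k : Fin (n+1) // k ≠ ℓ}, x i = -⟪Q i.1, Q ℓ⟫ := by
      intro i
      have hsum := hcoord x i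
      rw [← hwdef] at hsum
      rw [← hsum, hwQ, inner_neg_right]
    refine (Set.ncard_le_one (Set.toFinite _)).mpr ?_
    intro a ha c hc
    by_contra hac
    have ha' : x a < 0 := ha
    have hc' : x c < 0 := hc
    have hpa : 0 < ⟪Q a.1, Q ℓ⟫ := by have := hxval a; linarith
    have hpc : 0 < ⟪Q c.1, Q ℓ⟫ := by have := hxval c; linarith
    exact hone ℓ a.1 c.1 a.2 c.2 (fun h => hac (Subtype.ext h)) hpa hpc
  · intro j y hy
    have hyw : ∀ i : {k : Fin (n+1) // k ≠ ℓ},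
        ⟪v i.1 - v ℓ, ∑ jj : {k : Fin (n+1) // k ≠ ℓ}, y jj • (v jj.1 - v ℓ)⟫ =
          if i = j then 1 else 0 := by
      intro i
      have h0 := congrFun hy i
      rw [Matrix.mulVec, dotProduct] at h0
      have h0' : ∑ jj : {k : Fin (n+1) // k ≠ ℓ}, vGram v ℓ i jj * y jj =
          if i = j then 1 else 0 := by
        rw [h0, Pi.single_apply]
      rw [inner_sum]
      simp only [real_inner_smul_right]
      rw [← h0']
      refine Finset.sum_congr rfl fun jj _ => ?_
      rw [hG, mul_comm]
    set w := ∑ jj : {k : Fin (n+1) // k ≠ ℓ}, y jj • (v jj.1 - v ℓ) with hwdef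
    have hwQ : w = Q j.1 := by
      have hsub2 : w - Q j.1 = 0 := by
        apply hker
        intro k
        rw [inner_sub_left]
        rcases eq_or_ne k ℓ with rfl | hk
        · rw [sub_self, inner_zero_right, inner_zero_right, sub_zero]
        · have h1 : ⟪w, v k - v ℓ⟫ = if (⟨k, hk⟩ : {k : Fin (n+1) // k ≠ ℓ}) = j
              then 1 else 0 := by
            rw [real_inner_comm]; exact hyw ⟨k, hk⟩
          have h2 : ⟪Q j.1, v k - v ℓ⟫ = if (⟨k, hk⟩ : {k : Fin (n+1) // k ≠ ℓ}) = j
              then 1 else 0 := by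
            rw [hQ]
            by_cases hjk : j.1 = k
            · simp [hjk, j.2, Subtype.ext_iff, hk]
            · have : ¬ ((⟨k, hk⟩ : {k : Fin (n+1) // k ≠ ℓ}) = j) :=
                fun h => hjk (by rw [← h])
              simp [hjk, j.2, this]
          rw [h1, h2, sub_self]
      exact sub_eq_zero.mp hsub2
    have hyval : ∀ i : {k : Fin (n+1) // k ≠ ℓ}, y i = ⟪Q i.1, Q j.1⟫ := by
      intro i
      have hsum := hcoord y i
      rw [← hwdef] at hsum
      rw [← hsum, hwQ]
    have hSS : {i : {k : Fin (n+1) // k ≠ ℓ} | 0 < y i} ⊆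
        insert j ({i : {k : Fin (n+1) // k ≠ ℓ} | 0 < y i} \ {j}) := by
      intro i hi
      rcases eq_or_ne i j with rfl | hij
      · exact Set.mem_insert _ _
      · exact Set.mem_insert_of_mem _ ⟨hi, hij⟩
    have hsmall : ({i : {k : Fin (n+1) // k ≠ ℓ} | 0 < y i} \ {j}).ncard ≤ 1 := by
      refine (Set.ncard_le_one (Set.toFinite _)).mpr ?_
      rintro a ⟨ha, haj⟩ c ⟨hc, hcj⟩
      by_contra hac
      have hpa : 0 < ⟪Q a.1, Q j.1⟫ := by rw [← hyval a]; exact ha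
      have hpc : 0 < ⟪Q c.1, Q j.1⟫ := by rw [← hyval c]; exact hc
      exact hone j.1 a.1 c.1 (fun h => haj (Set.mem_singleton_iff.mpr (Subtype.ext h)))
        (fun h => hcj (Set.mem_singleton_iff.mpr (Subtype.ext h)))
        (fun h => hac (Subtype.ext h)) hpa hpc
    calc ({i : {k : Fin (n+1) // k ≠ ℓ} | 0 < y i}).ncard
        ≤ (insert j ({i : {k : Fin (n+1) // k ≠ ℓ} | 0 < y i} \ {j})).ncard :=
          Set.ncard_le_ncard hSS (Set.toFinite _)
      _ ≤ ({i : {k : Fin (n+1) // k ≠ ℓ} | 0 < y i} \ {j}).ncard + 1 :=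
          Set.ncard_insert_le _ _
      _ ≤ 2 := by omega
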